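/- arXiv:1605.05163 — 2 statements merged into one kernel-verified Lean document; each statement's English description precedes it below -/
import Mathlib

section
/- In the group Ξ = ⟨x, y | x³ = y² = 1⟩ ≅ ℤ/3 * ℤ/2, represented in PGL₂(𝔽_p(t)) (p ≥ 3) by x ↦ [(0,1;−1,−1)] and y ↦ [(0,1;t,0)], the resulting homomorphism ι : Ξ → PGL₂(𝔽_p(t)) is injective. -/
set_option synthInstance.maxHeartbeats 1000000
set_option maxHeartbeats 1000000


open Matrix Pointwise

/-- `PGL₂` of a field: the quotient of `GL₂` by its center. -/
abbrev PGL2 (K : Type*) [Field K] :=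
  GL (Fin 2) K ⧸ Subgroup.center (GL (Fin 2) K)

/-- The matrix `(0,1;−1,−1)` as an element of `GL₂(𝔽_p(t))`. -/
noncomputable def Xmat (p : ℕ) [Fact p.Prime] : GL (Fin 2) (RatFunc (ZMod p)) :=
  Matrix.nonsingInvUnit !![0, 1; -1, -1] (by
    simp [Matrix.det_fin_two_of])

/-- The matrix `(0,1;t,0)` as an element of `GL₂(𝔽_p(t))`. -/
noncomputable def Ymat (p : ℕ) [Fact p.Prime] : GL (Fin 2) (RatFunc (ZMod p)) :=
  Matrix.nonsingInvUnit !![0, 1; RatFunc.X, 0] (by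
    simp [Matrix.det_fin_two_of, RatFunc.X_ne_zero])

/-- The relations of `Ξ = ⟨x, y | x³, y²⟩ ≅ ℤ/3 * ℤ/2`. -/
def xiRels : Set (FreeGroup (Fin 2)) :=
  {FreeGroup.of 0 ^ 3, FreeGroup.of 1 ^ 2}

namespace XiPingPong

lemma mk_pow {G : Type*} [Group G] (N : Subgroup G) [N.Normal] (g : G) (n : ℕ) :
    (QuotientGroup.mk g : G ⧸ N) ^ n = QuotientGroup.mk (g ^ n) :=
  (map_pow (QuotientGroup.mk' N) g n).symm


section Action

variable {K : Type*} [Field K]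

/-- The permutation of submodules of `K²` induced by `g ∈ GL₂(K)`. -/
noncomputable def glPerm (g : GL (Fin 2) K) : Equiv.Perm (Submodule K (Fin 2 → K)) where
  toFun := Submodule.map (Matrix.mulVecLin (g : Matrix (Fin 2) (Fin 2) K))
  invFun := Submodule.map (Matrix.mulVecLin ((g⁻¹ : GL (Fin 2) K) : Matrix (Fin 2) (Fin 2) K))
  left_inv N := by
    rw [← Submodule.map_comp, ← Matrix.mulVecLin_mul, ← Units.val_mul, inv_mul_cancel,
      Units.val_one, Matrix.mulVecLin_one, Submodule.map_id]
  right_inv N := by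
    rw [← Submodule.map_comp, ← Matrix.mulVecLin_mul, ← Units.val_mul, mul_inv_cancel,
      Units.val_one, Matrix.mulVecLin_one, Submodule.map_id]

@[simp] lemma glPerm_apply (g : GL (Fin 2) K) (N : Submodule K (Fin 2 → K)) :
    glPerm g N = Submodule.map (Matrix.mulVecLin (g : Matrix (Fin 2) (Fin 2) K)) N := rfl

noncomputable def glHom : GL (Fin 2) K →* Equiv.Perm (Submodule K (Fin 2 → K)) where
  toFun := glPerm
  map_one' := Equiv.ext fun N => by
    simp [glPerm, Units.val_one, Matrix.mulVecLin_one]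
  map_mul' g h := Equiv.ext fun N => by
    simp [glPerm, Units.val_mul, Matrix.mulVecLin_mul, Submodule.map_comp]

/-- Elements of the center of `GL₂(K)` are scalar matrices. -/
lemma exists_scalar_of_mem_center {z : GL (Fin 2) K}
    (hz : z ∈ Subgroup.center (GL (Fin 2) K)) :
    ∃ a : K, a ≠ 0 ∧ (z : Matrix (Fin 2) (Fin 2) K) = a • 1 := by
  set m : Matrix (Fin 2) (Fin 2) K := (z : Matrix (Fin 2) (Fin 2) K) with hm
  have hU : IsUnit (!![1,1;0,1] : Matrix (Fin 2) (Fin 2) K).det := by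
    simp [Matrix.det_fin_two_of]
  have hL : IsUnit (!![1,0;1,1] : Matrix (Fin 2) (Fin 2) K).det := by
    simp [Matrix.det_fin_two_of]
  have e1 : !![1,1;0,1] * m = m * !![1,1;0,1] := by
    have := Subgroup.mem_center_iff.mp hz (Matrix.nonsingInvUnit _ hU)
    have := congrArg Units.val this
    simpa [Units.val_mul, Matrix.nonsingInvUnit] using this
  have e2 : !![1,0;1,1] * m = m * !![1,0;1,1] := by
    have := Subgroup.mem_center_iff.mp hz (Matrix.nonsingInvUnit _ hL)
    have := congrArg Units.val this
    simpa [Units.val_mul, Matrix.nonsingInvUnit] using this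
  have hc : m 1 0 = 0 := by
    have := congrFun (congrFun e1 0) 0
    simpa [Matrix.mul_apply, Fin.sum_univ_two] using this
  have hd : m 1 1 = m 0 0 := by
    have := congrFun (congrFun e1 0) 1
    simp [Matrix.mul_apply, Fin.sum_univ_two] at this
    linear_combination this
  have hb : m 0 1 = 0 := by
    have := congrFun (congrFun e2 0) 0
    simp [Matrix.mul_apply, Fin.sum_univ_two] at this
    exact this
  refine ⟨m 0 0, ?_, ?_⟩
  · have hu : IsUnit m.det := (Matrix.isUnit_iff_isUnit_det m).mp ⟨z, rfl⟩
    rw [Matrix.det_fin_two, hb, hc, hd] at hu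
    intro h0
    rw [h0] at hu
    simp at hu
  · have : m = !![m 0 0, m 0 1; m 1 0, m 1 1] := Matrix.eta_fin_two m
    rw [this, hb, hc, hd]
    ext i j
    fin_cases i <;> fin_cases j <;> simp [Matrix.one_apply]

lemma center_le_ker_glHom :
    Subgroup.center (GL (Fin 2) K) ≤ (glHom (K := K)).ker := by
  intro z hz
  obtain ⟨a, ha, hzm⟩ := exists_scalar_of_mem_center hz
  rw [MonoidHom.mem_ker]
  apply Equiv.ext
  intro N
  show glPerm z N = N
  rw [glPerm_apply, hzm]
  apply le_antisymm
  · rintro x hx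
    rw [Submodule.mem_map] at hx
    obtain ⟨y, hy, rfl⟩ := hx
    rw [Matrix.mulVecLin_apply, Matrix.smul_mulVec, Matrix.one_mulVec]
    exact N.smul_mem a hy
  · intro x hx
    rw [Submodule.mem_map]
    refine ⟨a⁻¹ • x, N.smul_mem _ hx, ?_⟩
    rw [Matrix.mulVecLin_apply, Matrix.smul_mulVec, Matrix.one_mulVec, smul_smul,
      mul_inv_cancel₀ ha, one_smul]

/-- The action of `PGL₂(K)` on submodules of `K²`. -/
noncomputable def pglHom : PGL2 K →* Equiv.Perm (Submodule K (Fin 2 → K)) :=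
  QuotientGroup.lift _ glHom center_le_ker_glHom

noncomputable instance pglAction : MulAction (PGL2 K) (Submodule K (Fin 2 → K)) :=
  MulAction.compHom _ pglHom

lemma mk_smul (g : GL (Fin 2) K) (N : Submodule K (Fin 2 → K)) :
    (QuotientGroup.mk g : PGL2 K) • N
      = Submodule.map (Matrix.mulVecLin (g : Matrix (Fin 2) (Fin 2) K)) N := rfl

/-- The point of `ℙ¹(K)` with coordinate `z`, as the line spanned by `(z, 1)`. -/
def pt (z : K) : Submodule K (Fin 2 → K) := Submodule.span K {![z, 1]}

/-- The point `∞` of `ℙ¹(K)`, the line spanned by `(1, 0)`. -/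
def inftyPt : Submodule K (Fin 2 → K) := Submodule.span K {![1, 0]}

lemma pt_injective : Function.Injective (pt (K := K)) := by
  intro z w h
  rw [pt, pt, Submodule.span_singleton_eq_span_singleton] at h
  obtain ⟨c, hc⟩ := h
  have h1 : (c : K) * 1 = 1 := by
    have := congrFun hc 1
    simpa [Units.smul_def] using this
  have h0 : (c : K) * z = w := by
    have := congrFun hc 0
    simpa [Units.smul_def] using this
  rw [mul_one] at h1
  rw [h1, one_mul] at h0
  exact h0

lemma inftyPt_ne_pt (z : K) : inftyPt ≠ pt z := by
  intro h
  rw [inftyPt, pt, Submodule.span_singleton_eq_span_singleton] at h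
  obtain ⟨c, hc⟩ := h
  have := congrFun hc 1
  simp [Units.smul_def] at this

lemma span_eq_pt {u v : K} (hv : v ≠ 0) :
    Submodule.span K {![u, v]} = pt (u / v) := by
  have h : ![u, v] = v • ![u / v, 1] := by
    funext i
    fin_cases i <;> simp [mul_div_cancel₀, hv, mul_comm, div_mul_cancel₀]
  rw [pt, h, Submodule.span_singleton_smul_eq (isUnit_iff_ne_zero.mpr hv)]

lemma span_smul_vec_eq (c : K) (hc : c ≠ 0) (w : Fin 2 → K) :
    Submodule.span K {c • w} = Submodule.span K {w} :=
  Submodule.span_singleton_smul_eq (isUnit_iff_ne_zero.mpr hc) w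

lemma mk_smul_span (g : GL (Fin 2) K) (w : Fin 2 → K) :
    (QuotientGroup.mk g : PGL2 K) • Submodule.span K {w}
      = Submodule.span K {(g : Matrix (Fin 2) (Fin 2) K).mulVec w} := by
  rw [mk_smul, Submodule.map_span, Set.image_singleton, Matrix.mulVecLin_apply]

lemma mulVec_fin_two (a b c d u v : K) :
    (!![a, b; c, d]).mulVec ![u, v] = ![a * u + b * v, c * u + d * v] := by
  funext i
  fin_cases i <;> simp [Matrix.mulVec, dotProduct, Fin.sum_univ_two]

end Action

section Degree

variable {F : Type*} [Field F]

open RatFunc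

lemma intDegree_inv {x : RatFunc F} (hx : x ≠ 0) : x⁻¹.intDegree = -x.intDegree := by
  have h := intDegree_mul hx (inv_ne_zero hx)
  rw [mul_inv_cancel₀ hx, intDegree_one] at h
  linarith

lemma intDegree_add_right {x y : RatFunc F} (hxy : x.intDegree < y.intDegree) (hy : y ≠ 0) :
    x + y ≠ 0 ∧ (x + y).intDegree = y.intDegree := by
  rcases eq_or_ne x 0 with rfl | hx
  · simp [hy]
  have hne : x + y ≠ 0 := by
    intro h0
    have : y = -x := by linear_combination h0
    rw [this, intDegree_neg] at hxy
    exact lt_irrefl _ hxy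
  refine ⟨hne, le_antisymm ?_ ?_⟩
  · have := intDegree_add_le hy hne
    simpa [max_eq_right hxy.le] using this
  · have h2 : (x + y) + (-x) = y := by ring
    have := intDegree_add_le (neg_ne_zero.mpr hx) (by rw [h2]; exact hy)
    rw [h2, intDegree_neg] at this
    rcases le_max_iff.mp this with h | h
    · exact h
    · exact absurd h (not_le.mpr hxy)

end Degree

section ZModHom

variable {G : Type*} [Group G]

/-- The homomorphism `ℤ/n → G` sending the generator to `g`, given `g ^ n = 1`. -/
def zmodHom {n : ℕ} [NeZero n] (g : G) (hg : g ^ n = 1) : Multiplicative (ZMod n) →* G :=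
  MonoidHom.mk' (fun a => g ^ (Multiplicative.toAdd a).val) (by
    intro a b
    show g ^ (Multiplicative.toAdd (a * b)).val = _
    rw [toAdd_mul, ZMod.val_add, ← pow_eq_pow_mod _ hg, pow_add])

@[simp] lemma zmodHom_apply {n : ℕ} [NeZero n] (g : G) (hg : g ^ n = 1)
    (a : Multiplicative (ZMod n)) : zmodHom g hg a = g ^ (Multiplicative.toAdd a).val := rfl

lemma zmodHom_ext {n : ℕ} [NeZero n] {f₁ f₂ : Multiplicative (ZMod n) →* G}
    (h : f₁ (Multiplicative.ofAdd 1) = f₂ (Multiplicative.ofAdd 1)) : f₁ = f₂ := by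
  refine MonoidHom.ext fun a => ?_
  have ha : a = (Multiplicative.ofAdd (1 : ZMod n)) ^ (Multiplicative.toAdd a : ZMod n).val := by
    rw [← ofAdd_nsmul]
    rw [nsmul_eq_mul, mul_one, ZMod.natCast_rightInverse (Multiplicative.toAdd a)]
    exact (ofAdd_toAdd a).symm
  rw [ha, map_pow, map_pow, h]

end ZModHom

section P

variable (p : ℕ) [Fact p.Prime]

local notation "K" => RatFunc (ZMod p)

lemma Xmat_val : ((Xmat p : GL (Fin 2) K) : Matrix (Fin 2) (Fin 2) K) = !![0, 1; -1, -1] := rfl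

lemma Ymat_val :
    ((Ymat p : GL (Fin 2) K) : Matrix (Fin 2) (Fin 2) K) = !![0, 1; RatFunc.X, 0] := rfl

lemma Xsq_val : (((Xmat p) ^ 2 : GL (Fin 2) K) : Matrix (Fin 2) (Fin 2) K)
    = !![-1, -1; 1, 0] := by
  rw [Units.val_pow_eq_pow_val, Xmat_val, pow_two, Matrix.mul_fin_two]
  norm_num

lemma Xmat_cube : (Xmat p) ^ 3 = 1 := by
  apply Units.ext
  rw [Units.val_pow_eq_pow_val, Xmat_val, pow_succ, pow_two, Matrix.mul_fin_two,
    Matrix.mul_fin_two, Units.val_one, Matrix.one_fin_two]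
  norm_num

lemma Ysq_val : (((Ymat p) ^ 2 : GL (Fin 2) K) : Matrix (Fin 2) (Fin 2) K)
    = (RatFunc.X : K) • (1 : Matrix (Fin 2) (Fin 2) K) := by
  rw [Units.val_pow_eq_pow_val, Ymat_val, pow_two, Matrix.mul_fin_two, Matrix.one_fin_two]
  ext i j
  fin_cases i <;> fin_cases j <;> simp

lemma Ysq_center : (Ymat p) ^ 2 ∈ Subgroup.center (GL (Fin 2) K) := by
  rw [Subgroup.mem_center_iff]
  intro g
  apply Units.ext
  rw [Units.val_mul, Units.val_mul, Ysq_val, mul_smul_comm, smul_mul_assoc, mul_one, one_mul]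

/-- The generators of the image: the classes of `Xmat` and `Ymat` in `PGL₂`. -/
noncomputable def gens : Fin 2 → PGL2 K :=
  ![QuotientGroup.mk (Xmat p), QuotientGroup.mk (Ymat p)]

/-- The orders of the two cyclic factors. -/
def nv : Fin 2 → ℕ := ![3, 2]

instance (i : Fin 2) : NeZero (nv i) := by fin_cases i <;> exact ⟨by decide⟩

lemma val_one_nv : ∀ i : Fin 2, (1 : ZMod (nv i)).val = 1 := by
  intro i; fin_cases i <;> decide

lemma gens_pow : ∀ i : Fin 2, gens p i ^ nv i = 1 := by
  intro i
  fin_cases i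
  · show (QuotientGroup.mk (Xmat p) : PGL2 K) ^ 3 = 1
    rw [mk_pow, Xmat_cube]
    rfl
  · show (QuotientGroup.mk (Ymat p) : PGL2 K) ^ 2 = 1
    rw [mk_pow]
    exact (QuotientGroup.eq_one_iff _).mpr (Ysq_center p)

/-- `z` is "small": the coordinate of a point in the residue disk around `0`. -/
def small (z : K) : Prop := z = 0 ∨ z.intDegree ≤ -1

/-- The ping-pong set for the order-3 generator: `∞` together with points with coordinate
of positive degree or close to `-1`. -/
noncomputable def XA : Set (Submodule K (Fin 2 → K)) :=
  insert inftyPt (pt '' {z : K | 1 ≤ z.intDegree ∨ small p (z + 1)})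

/-- The ping-pong set for the order-2 generator: points with small coordinate. -/
noncomputable def XB : Set (Submodule K (Fin 2 → K)) :=
  pt '' {z : K | small p z}

lemma d_add_one {z : K} (hd : z.intDegree ≤ -1) :
    z + 1 ≠ 0 ∧ (z + 1).intDegree = 0 := by
  have := intDegree_add_right (x := z) (y := 1)
    (by rw [RatFunc.intDegree_one]; omega) one_ne_zero
  rwa [RatFunc.intDegree_one] at this

lemma not_small_one : ¬ small p 1 := by
  rintro (h | h)
  · exact one_ne_zero h
  · rw [RatFunc.intDegree_one] at h; omega

lemma ne_zero_of_small_add_one {z : K} (h : small p (z + 1)) : z ≠ 0 := by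
  rintro rfl
  rw [zero_add] at h
  exact not_small_one p h

lemma d_eq_zero_of_small_add_one {z : K} (h : small p (z + 1)) : z.intDegree = 0 := by
  rcases h with h | h
  · have : z = -1 := by linear_combination h
    rw [this, RatFunc.intDegree_neg, RatFunc.intDegree_one]
  · have hlt : (z + 1).intDegree < (-1 : RatFunc (ZMod p)).intDegree := by
      rw [RatFunc.intDegree_neg, RatFunc.intDegree_one]; omega
    have h2 := intDegree_add_right hlt (neg_ne_zero.mpr one_ne_zero)
    rw [show z + 1 + -1 = z from by ring] at h2
    rw [h2.2, RatFunc.intDegree_neg, RatFunc.intDegree_one]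

lemma small_ne_neg_one {z : K} (h : small p z) : z + 1 ≠ 0 := by
  rcases h with rfl | h
  · simp
  · intro h0
    have : z = -1 := by linear_combination h0
    rw [this, RatFunc.intDegree_neg, RatFunc.intDegree_one] at h
    omega

lemma incl_X1 {N : Submodule K (Fin 2 → K)} (hN : N ∈ XB p) :
    (QuotientGroup.mk (Xmat p) : PGL2 K) • N ∈ XA p := by
  obtain ⟨z, hz, rfl⟩ := hN
  have hz1 : z + 1 ≠ 0 := small_ne_neg_one p hz
  have hne : -(z + 1) ≠ 0 := neg_ne_zero.mpr hz1
  rw [pt, mk_smul_span, Xmat_val, mulVec_fin_two]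
  have hvec : ![(0 : K) * z + 1 * 1, -1 * z + -1 * 1] = ![1, -(z + 1)] := by
    funext i; fin_cases i <;> (simp; try ring)
  rw [hvec, span_eq_pt hne]
  refine Set.mem_insert_iff.mpr (Or.inr ⟨1 / -(z + 1), Or.inr ?_, rfl⟩)
  rcases hz with rfl | hd
  · left; norm_num
  · right
    have hz0 : z ≠ 0 := by rintro rfl; rw [RatFunc.intDegree_zero] at hd; omega
    have h1 := d_add_one p hd
    have hne2 : (-1 : RatFunc (ZMod p)) + -z ≠ 0 := fun h => hz1 (by linear_combination -h)
    have hw : 1 / -(z + 1) + 1 = z * (z + 1)⁻¹ := by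
      field_simp
      ring
    rw [hw, RatFunc.intDegree_mul hz0 (inv_ne_zero h1.1), intDegree_inv h1.1, h1.2]
    omega

lemma incl_X2 {N : Submodule K (Fin 2 → K)} (hN : N ∈ XB p) :
    (QuotientGroup.mk ((Xmat p) ^ 2) : PGL2 K) • N ∈ XA p := by
  obtain ⟨z, hz, rfl⟩ := hN
  have hz1 : z + 1 ≠ 0 := small_ne_neg_one p hz
  rw [pt, mk_smul_span, Xsq_val, mulVec_fin_two]
  have hvec : ![(-1 : K) * z + -1 * 1, 1 * z + 0 * 1] = ![-(z + 1), z] := by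
    funext i; fin_cases i <;> (simp; try ring)
  rw [hvec]
  rcases hz with rfl | hd
  · have h0 : ![-(0 + 1), (0 : K)] = (-1 : K) • ![(1 : K), 0] := by
      funext i; fin_cases i <;> simp
    rw [h0, span_smul_vec_eq _ (by norm_num)]
    exact Set.mem_insert _ _
  · have hz0 : z ≠ 0 := by rintro rfl; rw [RatFunc.intDegree_zero] at hd; omega
    rw [span_eq_pt hz0]
    refine Set.mem_insert_iff.mpr (Or.inr ⟨-(z + 1) / z, Or.inl ?_, rfl⟩)
    have h1 := d_add_one p hd
    rw [div_eq_mul_inv, RatFunc.intDegree_mul (neg_ne_zero.mpr h1.1) (inv_ne_zero hz0),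
      RatFunc.intDegree_neg, intDegree_inv hz0, h1.2]
    omega

lemma incl_Y {N : Submodule K (Fin 2 → K)} (hN : N ∈ XA p) :
    (QuotientGroup.mk (Ymat p) : PGL2 K) • N ∈ XB p := by
  rcases Set.mem_insert_iff.mp hN with rfl | ⟨z, hz, rfl⟩
  · rw [inftyPt, mk_smul_span, Ymat_val, mulVec_fin_two]
    have hvec : ![(0 : K) * 1 + 1 * 0, RatFunc.X * 1 + 0 * 0] = (RatFunc.X : K) • ![(0 : K), 1] := by
      funext i; fin_cases i <;> simp
    rw [hvec, span_smul_vec_eq _ RatFunc.X_ne_zero]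
    exact ⟨0, Or.inl rfl, rfl⟩
  · have hz0 : z ≠ 0 := by
      rcases hz with h | h
      · rintro rfl; rw [RatFunc.intDegree_zero] at h; omega
      · exact ne_zero_of_small_add_one p h
    have htz : RatFunc.X * z ≠ 0 := mul_ne_zero RatFunc.X_ne_zero hz0
    rw [pt, mk_smul_span, Ymat_val, mulVec_fin_two]
    have hvec : ![(0 : K) * z + 1 * 1, RatFunc.X * z + 0 * 1] = ![1, RatFunc.X * z] := by
      funext i; fin_cases i <;> simp
    rw [hvec, span_eq_pt htz]
    refine ⟨1 / (RatFunc.X * z), Or.inr ?_, rfl⟩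
    rw [one_div, intDegree_inv htz, RatFunc.intDegree_mul RatFunc.X_ne_zero hz0,
      RatFunc.intDegree_X]
    rcases hz with h | h
    · omega
    · rw [d_eq_zero_of_small_add_one p h]
      norm_num

lemma XA_XB_disjoint : Disjoint (XA p) (XB p) := by
  rw [Set.disjoint_left]
  rintro N hA ⟨z, hz, rfl⟩
  rcases Set.mem_insert_iff.mp hA with h | ⟨w, hw, hwp⟩
  · exact inftyPt_ne_pt z h.symm
  · obtain rfl : w = z := pt_injective hwp
    rcases hz with rfl | hd
    · rcases hw with h | h
      · rw [RatFunc.intDegree_zero] at h; omega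
      · rw [zero_add] at h; exact not_small_one p h
    · rcases hw with h | h
      · omega
      · have := d_eq_zero_of_small_add_one p h
        omega

/-- The family of homomorphisms `ℤ/3, ℤ/2 → PGL₂`. -/
noncomputable def F : ∀ i : Fin 2, Multiplicative (ZMod (nv i)) →* PGL2 K :=
  fun i => zmodHom (gens p i) (gens_pow p i)

/-- The induced homomorphism `ℤ/3 ∗ ℤ/2 → PGL₂`. -/
noncomputable def kappa :
    Monoid.CoprodI (fun i : Fin 2 => Multiplicative (ZMod (nv i))) →* PGL2 K :=
  Monoid.CoprodI.lift (F p)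

/-- The two ping-pong sets. -/
noncomputable def Xsets : Fin 2 → Set (Submodule K (Fin 2 → K)) := ![XA p, XB p]

lemma kappa_injective : Function.Injective (kappa p) := by
  apply Monoid.CoprodI.lift_injective_of_ping_pong (F p) ?_ (Xsets p) ?_ ?_ ?_
  · right
    refine ⟨0, ?_⟩
    rw [Cardinal.mk_fintype, Fintype.card_multiplicative, ZMod.card]
    norm_num [nv]
  · intro i
    fin_cases i
    · exact ⟨inftyPt, Set.mem_insert _ _⟩
    · exact ⟨pt 0, ⟨0, Or.inl rfl, rfl⟩⟩
  · intro i j hij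
    fin_cases i <;> fin_cases j
    · exact absurd rfl hij
    · simpa [Function.onFun, Xsets] using XA_XB_disjoint p
    · simpa [Function.onFun, Xsets] using (XA_XB_disjoint p).symm
    · exact absurd rfl hij
  · intro i j hij
    fin_cases i <;> fin_cases j
    · exact absurd rfl hij
    · intro h hne
      have h0 : Multiplicative.toAdd h ≠ 0 := by
        intro h0
        apply hne
        have : h = Multiplicative.ofAdd 0 := by
          rw [← h0]; rfl
        rw [this]; rfl
      have ha : Multiplicative.toAdd h = 1 ∨ Multiplicative.toAdd h = 2 := by
        revert h0; revert h; decide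
      intro x hx
      rw [Set.mem_smul_set] at hx
      obtain ⟨N, hN, rfl⟩ := hx
      rcases ha with ha | ha
      · have hF : F p 0 h = QuotientGroup.mk (Xmat p) := by
          show gens p 0 ^ (Multiplicative.toAdd h).val = _
          rw [ha, val_one_nv, pow_one]
          simp [gens]
        simpa [Xsets, hF] using incl_X1 p (by simpa [Xsets] using hN)
      · have hF : F p 0 h = QuotientGroup.mk ((Xmat p) ^ 2) := by
          show gens p 0 ^ (Multiplicative.toAdd h).val = _
          rw [ha]
          show gens p 0 ^ (2 : ZMod (nv 0)).val = _
          rw [show (2 : ZMod (nv 0)).val = 2 by decide, ← mk_pow]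
          simp [gens]
        simpa [Xsets, hF] using incl_X2 p (by simpa [Xsets] using hN)
    · intro h hne
      have h0 : Multiplicative.toAdd h ≠ 0 := by
        intro h0
        apply hne
        have : h = Multiplicative.ofAdd 0 := by
          rw [← h0]; rfl
        rw [this]; rfl
      have ha : Multiplicative.toAdd h = 1 := by
        revert h0; revert h; decide
      intro x hx
      rw [Set.mem_smul_set] at hx
      obtain ⟨N, hN, rfl⟩ := hx
      have hF : F p 1 h = QuotientGroup.mk (Ymat p) := by
        show gens p 1 ^ (Multiplicative.toAdd h).val = _
        rw [ha, val_one_nv, pow_one]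
        simp [gens]
      simpa [Xsets, hF] using incl_Y p (by simpa [Xsets] using hN)
    · exact absurd rfl hij

lemma of_pow : ∀ i : Fin 2, (PresentedGroup.of (rels := xiRels) i) ^ nv i = 1 := by
  have key : ∀ w ∈ xiRels, (PresentedGroup.mk xiRels w) = 1 := fun w hw =>
    (QuotientGroup.eq_one_iff w).mpr (Subgroup.subset_normalClosure hw)
  intro i
  fin_cases i
  · show (PresentedGroup.of (rels := xiRels) 0) ^ 3 = 1
    rw [show (PresentedGroup.of (rels := xiRels) 0) ^ 3
        = PresentedGroup.mk xiRels (FreeGroup.of 0 ^ 3) from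
      (map_pow (PresentedGroup.mk xiRels) _ _).symm]
    exact key _ (Set.mem_insert _ _)
  · show (PresentedGroup.of (rels := xiRels) 1) ^ 2 = 1
    rw [show (PresentedGroup.of (rels := xiRels) 1) ^ 2
        = PresentedGroup.mk xiRels (FreeGroup.of 1 ^ 2) from
      (map_pow (PresentedGroup.mk xiRels) _ _).symm]
    exact key _ (Set.mem_insert_of_mem _ rfl)

/-- The homomorphism `ℤ/3 ∗ ℤ/2 → Ξ`. -/
noncomputable def piHom :
    Monoid.CoprodI (fun i : Fin 2 => Multiplicative (ZMod (nv i))) →* PresentedGroup xiRels :=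
  Monoid.CoprodI.lift (fun i => zmodHom (PresentedGroup.of i) (of_pow i))

lemma piHom_of (i : Fin 2) :
    piHom (Monoid.CoprodI.of (Multiplicative.ofAdd (1 : ZMod (nv i))))
      = PresentedGroup.of i := by
  rw [piHom, Monoid.CoprodI.lift_of]
  simp [val_one_nv i]

lemma piHom_surjective : Function.Surjective piHom := by
  intro x
  refine QuotientGroup.induction_on x ?_
  intro w
  refine FreeGroup.induction_on
    (C := fun w => ∃ y, piHom y = QuotientGroup.mk w) w ⟨1, map_one _⟩
    (fun x => ⟨Monoid.CoprodI.of (Multiplicative.ofAdd (1 : ZMod (nv x))), ?_⟩)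
    (fun x hx => ?_) (fun x y hx hy => ?_)
  · rw [piHom_of]; rfl
  · obtain ⟨y, hy⟩ := hx
    exact ⟨y⁻¹, by rw [_root_.map_inv, hy]; rfl⟩
  · obtain ⟨a, ha⟩ := hx
    obtain ⟨b, hb⟩ := hy
    exact ⟨a * b, by rw [_root_.map_mul, ha, hb]; rfl⟩

end P

end XiPingPong

open XiPingPong

/-- The homomorphism `Ξ → PGL₂(𝔽_p(t))` (for `p ≥ 3`) sending `x` to the class of
`(0,1;−1,−1)` and `y` to the class of `(0,1;t,0)` exists and is injective. -/
theorem xi_to_PGL2_injective (p : ℕ) [Fact p.Prime] (hp : 3 ≤ p) :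
    ∃ ι : PresentedGroup xiRels →* PGL2 (RatFunc (ZMod p)),
      ι (PresentedGroup.of 0) = (QuotientGroup.mk (Xmat p) : PGL2 (RatFunc (ZMod p))) ∧
      ι (PresentedGroup.of 1) = (QuotientGroup.mk (Ymat p) : PGL2 (RatFunc (ZMod p))) ∧
      Function.Injective ι := by
  have hrel : ∀ r ∈ xiRels, (FreeGroup.lift (gens p)) r = 1 := by
    intro r hr
    simp only [xiRels, Set.mem_insert_iff, Set.mem_singleton_iff] at hr
    rcases hr with rfl | rfl
    · rw [map_pow, FreeGroup.lift_apply_of]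
      exact gens_pow p 0
    · rw [map_pow, FreeGroup.lift_apply_of]
      exact gens_pow p 1
  refine ⟨PresentedGroup.toGroup hrel, ?_, ?_, ?_⟩
  · rw [PresentedGroup.toGroup.of]; simp [gens]
  · rw [PresentedGroup.toGroup.of]; simp [gens]
  · have hcomp : (PresentedGroup.toGroup hrel).comp piHom = kappa p := by
      apply Monoid.CoprodI.ext_hom
      intro i
      apply zmodHom_ext (n := nv i)
      rw [MonoidHom.comp_apply, MonoidHom.comp_apply, MonoidHom.comp_apply, piHom_of,
        PresentedGroup.toGroup.of]
      rw [kappa, Monoid.CoprodI.lift_of]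
      show _ = gens p i ^ (Multiplicative.toAdd (Multiplicative.ofAdd (1 : ZMod (nv i)))).val
      rw [toAdd_ofAdd, val_one_nv, pow_one]
    intro a b hab
    obtain ⟨a', rfl⟩ := piHom_surjective a
    obtain ⟨b', rfl⟩ := piHom_surjective b
    have h2 : kappa p a' = kappa p b' := by
      rw [← hcomp]
      exact hab
    rw [kappa_injective p h2]
end

section
/- The image of the group generated by the matrices (0,1;−1,−1) and (0,1;t,0) in PGL₂(𝔽_p(t)) contains a nonabelian free subgroup; in particular the subgroup generated by the images of these two matrices is infinite. -/
open Matrix Projectivization Polynomial Pointwise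

set_option maxHeartbeats 1000000
set_option synthInstance.maxHeartbeats 400000

section Setup

variable {K : Type} [Field K]

abbrev PP (K : Type) [Field K] := Projectivization K (Fin 2 → K)

lemma gcancel (g : GL (Fin 2) K) (v : Fin 2 → K) :
    (↑g⁻¹ : Matrix (Fin 2) (Fin 2) K) *ᵥ ((↑g : Matrix (Fin 2) (Fin 2) K) *ᵥ v) = v := by
  rw [Matrix.mulVec_mulVec, ← Units.val_mul, inv_mul_cancel, Units.val_one, Matrix.one_mulVec]

lemma gmulVec_injective (g : GL (Fin 2) K) :
    Function.Injective (fun v => (↑g : Matrix (Fin 2) (Fin 2) K) *ᵥ v) := by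
  intro v w h
  have h2 := congrArg (fun u => (↑g⁻¹ : Matrix (Fin 2) (Fin 2) K) *ᵥ u) h
  simpa only [gcancel] using h2

lemma gmulVec_ne_zero (g : GL (Fin 2) K) {v : Fin 2 → K} (hv : v ≠ 0) :
    (↑g : Matrix (Fin 2) (Fin 2) K) *ᵥ v ≠ 0 := by
  intro h0
  apply hv
  exact gmulVec_injective g (show _ = (fun v => (↑g : Matrix (Fin 2) (Fin 2) K) *ᵥ v) 0 by
    simpa [Matrix.mulVec_zero] using h0)

noncomputable def pact (g : GL (Fin 2) K) : PP K → PP K :=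
  Projectivization.map (Matrix.mulVecLin (g : Matrix (Fin 2) (Fin 2) K))
    (by intro v w h; exact gmulVec_injective g (by simpa [Matrix.mulVecLin_apply] using h))

lemma pact_mk (g : GL (Fin 2) K) (v : Fin 2 → K) (hv : v ≠ 0) :
    pact g (mk K v hv) = mk K ((g : Matrix (Fin 2) (Fin 2) K) *ᵥ v) (gmulVec_ne_zero g hv) := by
  rfl

lemma pact_pact (g h : GL (Fin 2) K) (P : PP K) :
    pact g (pact h P) = pact (g * h) P := by
  induction P using Projectivization.ind with
  | h v hv => rw [pact_mk, pact_mk, pact_mk]; congr 1; simp only [Units.val_mul, Matrix.mulVec_mulVec]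

lemma pact_one (P : PP K) : pact (1 : GL (Fin 2) K) P = P := by
  induction P using Projectivization.ind with
  | h v hv => rw [pact_mk]; congr 1; simp

noncomputable def pperm (g : GL (Fin 2) K) : Equiv.Perm (PP K) where
  toFun := pact g
  invFun := pact g⁻¹
  left_inv := fun P => by rw [pact_pact, inv_mul_cancel, pact_one]
  right_inv := fun P => by rw [pact_pact, mul_inv_cancel, pact_one]

noncomputable def rho0 : GL (Fin 2) K →* Equiv.Perm (PP K) where
  toFun := pperm
  map_one' := by ext P; exact pact_one P
  map_mul' g h := by ext P; exact (pact_pact g h P).symm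

lemma center_le_ker_rho0 : Subgroup.center (GL (Fin 2) K) ≤ (rho0 (K := K)).ker := by
  intro g hg
  have hcom : ∀ t : TransvectionStruct (Fin 2) K,
      Commute t.toMatrix (g : Matrix (Fin 2) (Fin 2) K) := by
    intro t
    have hu : IsUnit t.toMatrix.det := by simp [t.det]
    have h1 := (Subgroup.mem_center_iff.1 hg) (Matrix.nonsingInvUnit t.toMatrix hu)
    have h2 := congrArg Units.val h1
    simpa [Units.val_mul, Matrix.nonsingInvUnit, Commute, SemiconjBy] using h2
  obtain ⟨r, hr⟩ := Matrix.mem_range_scalar_of_commute_transvectionStruct hcom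
  have hr0 : r ≠ 0 := by
    rintro rfl
    have hdet : IsUnit (g : Matrix (Fin 2) (Fin 2) K).det :=
      (Matrix.isUnit_iff_isUnit_det _).1 g.isUnit
    rw [← hr] at hdet
    simp at hdet
  rw [MonoidHom.mem_ker]
  apply Equiv.ext
  intro P
  induction P using Projectivization.ind with
  | h v hv =>
    show pact g (mk K v hv) = mk K v hv
    rw [pact_mk]
    rw [Projectivization.mk_eq_mk_iff']
    refine ⟨r, ?_⟩
    rw [← hr]
    funext i
    fin_cases i <;>
      simp [Matrix.mulVec, dotProduct, Matrix.scalar_apply, Matrix.diagonal,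
        Fin.sum_univ_two, Matrix.of_apply]

end Setup


section Poly
variable {F : Type} [Field F]

local notation "Pol" => Polynomial F
local notation "K" => RatFunc F
local notation "φ" => algebraMap (Polynomial F) (RatFunc F)

/-- vector with polynomial coordinates -/
noncomputable def v2 (x y : Pol) : Fin 2 → K := ![φ x, φ y]

lemma v2_ne_zero {x y : Pol} (h : ¬ (x = 0 ∧ y = 0)) : v2 x y ≠ 0 := by
  intro h0
  apply h
  have h1 := congrFun h0 0
  have h2 := congrFun h0 1
  simp [v2] at h1 h2
  exact ⟨h1, h2⟩

lemma norm_ne_zero {x y : Pol} (h : ¬ (X ∣ x ∧ X ∣ y)) : v2 x y ≠ 0 := by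
  apply v2_ne_zero
  rintro ⟨rfl, rfl⟩
  exact h ⟨dvd_zero _, dvd_zero _⟩

lemma v2_smul (c x y : Pol) : v2 (c * x) (c * y) = (φ c) • v2 x y := by
  funext i
  fin_cases i <;> simp [v2, _root_.map_mul]

/-- strip common powers of X -/
lemma strip : ∀ (n : ℕ) (x y : Pol), x.natDegree + y.natDegree ≤ n → ¬(x = 0 ∧ y = 0) →
    ∃ e x' y' : Pol, e ≠ 0 ∧ x = e * x' ∧ y = e * y' ∧ ¬ (X ∣ x' ∧ X ∣ y') := by
  intro n
  induction n with
  | zero =>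
    intro x y hdeg hxy
    refine ⟨1, x, y, one_ne_zero, (one_mul x).symm, (one_mul y).symm, ?_⟩
    rintro ⟨hx, hy⟩
    apply hxy
    have hx0 : x.natDegree = 0 := by omega
    have hy0 : y.natDegree = 0 := by omega
    constructor
    · rcases Polynomial.natDegree_eq_zero.1 hx0 with ⟨a, rfl⟩
      have := Polynomial.X_dvd_iff.1 hx
      simpa using (by simpa using this : a = 0) ▸ rfl
    · rcases Polynomial.natDegree_eq_zero.1 hy0 with ⟨a, rfl⟩
      have := Polynomial.X_dvd_iff.1 hy
      simpa using (by simpa using this : a = 0) ▸ rfl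
  | succ n ih =>
    intro x y hdeg hxy
    by_cases hd : X ∣ x ∧ X ∣ y
    · obtain ⟨⟨x1, rfl⟩, ⟨y1, rfl⟩⟩ := hd
      have hxy1 : ¬ (x1 = 0 ∧ y1 = 0) := by
        rintro ⟨rfl, rfl⟩; exact hxy ⟨mul_zero _, mul_zero _⟩
      have hdeg1 : x1.natDegree + y1.natDegree ≤ n := by
        rcases (not_and_or.1 hxy1) with h1 | h1
        · by_cases hy1 : y1 = 0
          · subst hy1
            have : (X * x1).natDegree = x1.natDegree + 1 := by
              rw [Polynomial.natDegree_X_mul h1]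
            simp only [mul_zero, Polynomial.natDegree_zero] at hdeg ⊢
            omega
          · have h2 : (X * x1).natDegree = x1.natDegree + 1 := Polynomial.natDegree_X_mul h1
            have h3 : (X * y1).natDegree = y1.natDegree + 1 := Polynomial.natDegree_X_mul hy1
            omega
        · by_cases hx1 : x1 = 0
          · subst hx1
            have h3 : (X * y1).natDegree = y1.natDegree + 1 := Polynomial.natDegree_X_mul h1
            simp only [mul_zero, Polynomial.natDegree_zero] at hdeg ⊢
            omega
          · have h2 : (X * x1).natDegree = x1.natDegree + 1 := Polynomial.natDegree_X_mul hx1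
            have h3 : (X * y1).natDegree = y1.natDegree + 1 := Polynomial.natDegree_X_mul h1
            omega
      obtain ⟨e, x', y', he, hx', hy', hnorm⟩ := ih x1 y1 hdeg1 hxy1
      exact ⟨X * e, x', y', mul_ne_zero Polynomial.X_ne_zero he,
        by rw [hx', mul_assoc], by rw [hy', mul_assoc], hnorm⟩
    · exact ⟨1, x, y, one_ne_zero, (one_mul x).symm, (one_mul y).symm, hd⟩

lemma num_eq (q : K) : φ q.num = q * φ q.denom := by
  have h := RatFunc.num_div_denom q
  have hd : (φ q.denom : K) ≠ 0 := RatFunc.algebraMap_ne_zero (RatFunc.denom_ne_zero q)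
  exact (div_eq_iff hd).1 h

/-- every point of ℙ¹ has a normalized polynomial representative -/
lemma exists_rep (P : Projectivization K (Fin 2 → K)) :
    ∃ (x y : Pol) (h : v2 x y ≠ 0), ¬ (X ∣ x ∧ X ∣ y) ∧ P = mk K (v2 x y) h := by
  induction P using Projectivization.ind with
  | h v hv =>
    set a := v 0 with ha
    set b := v 1 with hb
    have hab : ¬ (a = 0 ∧ b = 0) := by
      rintro ⟨h0, h1⟩
      apply hv
      funext i; fin_cases i <;> simp [← ha, ← hb, h0, h1]
    -- polynomial representative before stripping
    set x0 : Pol := a.num * b.denom with hx0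
    set y0 : Pol := b.num * a.denom with hy0
    have hd : (φ (a.denom * b.denom)) ≠ 0 := by
      simp [_root_.map_mul, RatFunc.algebraMap_ne_zero, RatFunc.denom_ne_zero]
    have c0 : (φ x0 : K) = φ (a.denom * b.denom) * v 0 := by
      rw [hx0, _root_.map_mul, _root_.map_mul, num_eq, ← ha]; ring
    have c1 : (φ y0 : K) = φ (a.denom * b.denom) * v 1 := by
      rw [hy0, _root_.map_mul, _root_.map_mul, num_eq, ← hb]; ring
    have hveq : v2 x0 y0 = (φ (a.denom * b.denom)) • v := by
      funext i
      fin_cases i <;> simp [v2, c0, c1, Fin.mk_zero, Fin.mk_one]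
    -- now strip
    have hxy0 : ¬ (x0 = 0 ∧ y0 = 0) := by
      rintro ⟨h0, h1⟩
      rcases mul_eq_zero.1 h0 with h0' | h0'
      · rcases mul_eq_zero.1 h1 with h1' | h1'
        · exact hab ⟨RatFunc.num_eq_zero_iff.1 h0', RatFunc.num_eq_zero_iff.1 h1'⟩
        · exact RatFunc.denom_ne_zero a h1'
      · exact RatFunc.denom_ne_zero b h0'
    obtain ⟨e, x', y', he, hx', hy', hnorm⟩ := strip (x0.natDegree + y0.natDegree) x0 y0 le_rfl hxy0
    refine ⟨x', y', norm_ne_zero hnorm, hnorm, ?_⟩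
    have he' : (φ e : K) ≠ 0 := RatFunc.algebraMap_ne_zero he
    have h2 : v2 x0 y0 = (φ e : K) • v2 x' y' := by rw [hx', hy', v2_smul]
    rw [Projectivization.mk_eq_mk_iff']
    refine ⟨(φ (a.denom * b.denom) : K)⁻¹ * (φ e : K), ?_⟩
    have h3 : v2 x0 y0 ≠ 0 := v2_ne_zero hxy0
    calc ((φ (a.denom * b.denom) : K)⁻¹ * (φ e : K)) • v2 x' y'
        = (φ (a.denom * b.denom) : K)⁻¹ • ((φ e : K) • v2 x' y') := by rw [mul_smul]
      _ = (φ (a.denom * b.denom) : K)⁻¹ • v2 x0 y0 := by rw [h2]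
      _ = (φ (a.denom * b.denom) : K)⁻¹ • ((φ (a.denom * b.denom) : K) • v) := by rw [hveq]
      _ = v := by rw [smul_smul, inv_mul_cancel₀ hd, one_smul]

/-- if two normalized polynomial vectors give the same projective point, their
coordinates are proportional with X-unit ratio -/
lemma transfer {x y x' y' : Pol} (hn : ¬ (X ∣ x ∧ X ∣ y)) (hn' : ¬ (X ∣ x' ∧ X ∣ y'))
    (h : mk K (v2 x y) (norm_ne_zero hn) = mk K (v2 x' y') (norm_ne_zero hn')) :
    ∃ c d : Pol, ¬ X ∣ c ∧ ¬ X ∣ d ∧ d * x = c * x' ∧ d * y = c * y' := by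
  rw [Projectivization.mk_eq_mk_iff'] at h
  obtain ⟨a, hav⟩ := h
  have ha0 : a ≠ 0 := by
    rintro rfl
    rw [zero_smul] at hav
    exact norm_ne_zero hn hav.symm
  have h0 := congrFun hav 0
  have h1 := congrFun hav 1
  simp only [v2, Pi.smul_apply, smul_eq_mul, Matrix.cons_val_zero, Matrix.cons_val_one,
    Matrix.head_cons] at h0 h1
  -- a = num/denom
  have hnum : (φ a.num : K) = a * φ a.denom := num_eq a
  have hden : a.denom ≠ 0 := RatFunc.denom_ne_zero a
  have hnum0 : a.num ≠ 0 := RatFunc.num_ne_zero ha0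
  -- strip common X powers from (num, denom)
  obtain ⟨e, c, d, he, hc, hd, hnorm⟩ := strip (a.num.natDegree + a.denom.natDegree) a.num a.denom
    le_rfl (by rintro ⟨h', _⟩; exact hnum0 h')
  have hc0 : c ≠ 0 := by rintro rfl; apply hnum0; rw [hc, mul_zero]
  have hd0 : d ≠ 0 := by rintro rfl; apply hden; rw [hd, mul_zero]
  -- key equations d * x = c * x' , d * y = c * y'
  have he' : (φ e : K) ≠ 0 := RatFunc.algebraMap_ne_zero he
  have key : ∀ u u' : Pol, a * φ u' = (φ u : K) → d * u = c * u' := by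
    intro u u' hu
    apply RatFunc.algebraMap_injective F
    rw [_root_.map_mul, _root_.map_mul]
    have h2 : (φ a.denom : K) * φ u = φ a.num * φ u' := by
      rw [hnum, ← hu]; ring
    rw [hc, hd, _root_.map_mul, _root_.map_mul, mul_assoc, mul_assoc] at h2
    exact mul_left_cancel₀ he' h2
  have key0 : d * x = c * x' := key x x' h0
  have key1 : d * y = c * y' := key y y' h1
  refine ⟨c, d, ?_, ?_, key0, key1⟩
  · intro hXc
    have hXd : ¬ X ∣ d := fun hXd => hnorm ⟨hXc, hXd⟩
    apply hn
    constructor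
    · have hdx : (X : Pol) ∣ d * x := key0 ▸ (hXc.mul_right x')
      rcases (Polynomial.prime_X.2.2 _ _ hdx) with h' | h'
      · exact absurd h' hXd
      · exact h'
    · have hdy : (X : Pol) ∣ d * y := key1 ▸ (hXc.mul_right y')
      rcases (Polynomial.prime_X.2.2 _ _ hdy) with h' | h'
      · exact absurd h' hXd
      · exact h'
  · intro hXd
    have hXc : ¬ X ∣ c := fun hXc => hnorm ⟨hXc, hXd⟩
    apply hn'
    constructor
    · have hdx : (X : Pol) ∣ c * x' := key0 ▸ (hXd.mul_right x)
      rcases (Polynomial.prime_X.2.2 _ _ hdx) with h' | h'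
      · exact absurd h' hXc
      · exact h'
    · have hdy : (X : Pol) ∣ c * y' := key1 ▸ (hXd.mul_right y)
      rcases (Polynomial.prime_X.2.2 _ _ hdy) with h' | h'
      · exact absurd h' hXc
      · exact h'

lemma notX_one : ¬ (X : Pol) ∣ 1 := by
  rw [Polynomial.X_dvd_iff]; simp

lemma notX_one_sub_X : ¬ (X : Pol) ∣ (1 - X) := by
  rw [Polynomial.X_dvd_iff]; simp

/-- the four conditions -/
def CA (x y : Pol) : Prop := X ∣ x ∧ ¬ X ∣ y
def CAi (x y : Pol) : Prop := ¬ X ∣ x ∧ X ∣ y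
def CB (x y : Pol) : Prop := X^2 ∣ x + y ∧ ¬ X ∣ y
def CBi (x y : Pol) : Prop := X^2 ∣ x + (1 - X) * y ∧ ¬ X ∣ y

lemma CA_norm {x y : Pol} (h : CA x y) : ¬ (X ∣ x ∧ X ∣ y) := fun hh => h.2 hh.2
lemma CAi_norm {x y : Pol} (h : CAi x y) : ¬ (X ∣ x ∧ X ∣ y) := fun hh => h.1 hh.1
lemma CB_norm {x y : Pol} (h : CB x y) : ¬ (X ∣ x ∧ X ∣ y) := fun hh => h.2 hh.2
lemma CBi_norm {x y : Pol} (h : CBi x y) : ¬ (X ∣ x ∧ X ∣ y) := fun hh => h.2 hh.2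

/-- subsets of the projective line defined by conditions on normalized reps -/
def Sset (C : Pol → Pol → Prop) : Set (Projectivization K (Fin 2 → K)) :=
  {P | ∃ (x y : Pol) (h : v2 x y ≠ 0), C x y ∧ P = mk K (v2 x y) h}

lemma mem_Sset {C : Pol → Pol → Prop} {x y : Pol} (h : v2 x y ≠ 0) (hC : C x y) :
    mk K (v2 x y) h ∈ Sset C := ⟨x, y, h, hC, rfl⟩

lemma X_dvd_of_dvd_mul {d u : Pol} (hd : ¬ X ∣ d) (h : (X : Pol) ∣ d * u) : X ∣ u := by
  rcases Polynomial.prime_X.2.2 _ _ h with h' | h'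
  · exact absurd h' hd
  · exact h'

/-- master disjointness: any two of the four sets are disjoint -/
lemma disj_aux {C1 C2 : Pol → Pol → Prop}
    (hnorm1 : ∀ {x y}, C1 x y → ¬ (X ∣ x ∧ X ∣ y))
    (hnorm2 : ∀ {x y}, C2 x y → ¬ (X ∣ x ∧ X ∣ y))
    (hcontra : ∀ x y x' y' c d, C1 x y → C2 x' y' → ¬ X ∣ c → ¬ X ∣ d →
      d * x = c * x' → d * y = c * y' → False) :
    Disjoint (Sset (F := F) C1) (Sset (F := F) C2) := by
  rw [Set.disjoint_left]
  rintro P ⟨x, y, h, hC, rfl⟩ ⟨x', y', h', hC', heq⟩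
  have hn := hnorm1 hC
  have hn' := hnorm2 hC'
  have heq2 : mk K (v2 x y) (norm_ne_zero hn) = mk K (v2 x' y') (norm_ne_zero hn') := heq
  obtain ⟨c, d, hc, hd, k0, k1⟩ := transfer hn hn' heq2
  exact hcontra x y x' y' c d hC hC' hc hd k0 k1

lemma disj_CA_CAi : Disjoint (Sset (F := F) CA) (Sset (F := F) CAi) := by
  refine disj_aux (fun h => CA_norm h) (fun h => CAi_norm h) ?_
  rintro x y x' y' c d ⟨hx, hy⟩ ⟨hx', hy'⟩ hc hd k0 k1
  exact hy (X_dvd_of_dvd_mul hd (k1 ▸ hy'.mul_left c))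

lemma X_dvd_X_sq : (X : Pol) ∣ X^2 := dvd_pow_self _ two_ne_zero

lemma X_add_cancel {u v : Pol} (h : (X : Pol) ∣ u + v) (hu : (X : Pol) ∣ u) : (X : Pol) ∣ v := by
  have h2 := dvd_sub h hu
  rwa [add_sub_cancel_left] at h2

lemma disj_CA_CB : Disjoint (Sset (F := F) CA) (Sset (F := F) CB) := by
  refine disj_aux (fun h => CA_norm h) (fun h => CB_norm h) ?_
  rintro x y x' y' c d ⟨hx, hy⟩ ⟨hs', hy'⟩ hc hd k0 k1
  have hxx' : (X : Pol) ∣ x' := X_dvd_of_dvd_mul hc (k0 ▸ hx.mul_left d)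
  exact hy' (X_add_cancel (X_dvd_X_sq.trans hs') hxx')

lemma disj_CA_CBi : Disjoint (Sset (F := F) CA) (Sset (F := F) CBi) := by
  refine disj_aux (fun h => CA_norm h) (fun h => CBi_norm h) ?_
  rintro x y x' y' c d ⟨hx, hy⟩ ⟨hs', hy'⟩ hc hd k0 k1
  have hxx' : (X : Pol) ∣ x' := X_dvd_of_dvd_mul hc (k0 ▸ hx.mul_left d)
  have h2 : (X : Pol) ∣ (1 - X) * y' := X_add_cancel (X_dvd_X_sq.trans hs') hxx'
  exact hy' (X_dvd_of_dvd_mul notX_one_sub_X h2)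

lemma disj_CAi_CB : Disjoint (Sset (F := F) CAi) (Sset (F := F) CB) := by
  refine disj_aux (fun h => CAi_norm h) (fun h => CB_norm h) ?_
  rintro x y x' y' c d ⟨hx, hy⟩ ⟨hs', hy'⟩ hc hd k0 k1
  exact hy' (X_dvd_of_dvd_mul hc (k1 ▸ hy.mul_left d))

lemma disj_CAi_CBi : Disjoint (Sset (F := F) CAi) (Sset (F := F) CBi) := by
  refine disj_aux (fun h => CAi_norm h) (fun h => CBi_norm h) ?_
  rintro x y x' y' c d ⟨hx, hy⟩ ⟨hs', hy'⟩ hc hd k0 k1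
  exact hy' (X_dvd_of_dvd_mul hc (k1 ▸ hy.mul_left d))

lemma disj_CB_CBi : Disjoint (Sset (F := F) CB) (Sset (F := F) CBi) := by
  refine disj_aux (fun h => CB_norm h) (fun h => CBi_norm h) ?_
  rintro x y x' y' c d ⟨hs, hy⟩ ⟨hs', hy'⟩ hc hd k0 k1
  have hcomp : d * (x + y) - c * (x' + (1 - X) * y') = X * (d * y) := by
    linear_combination k0 + (1 - X) * k1
  have h1 : (X:Pol)^2 ∣ d * (x + y) := hs.mul_left d
  have h2 : (X:Pol)^2 ∣ c * (x' + (1 - X) * y') := hs'.mul_left c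
  have h3 : (X:Pol)^2 ∣ X * (d * y) := hcomp ▸ dvd_sub h1 h2
  have h4 : (X:Pol) ∣ d * y := by
    rcases h3 with ⟨k, hk⟩
    refine ⟨k, ?_⟩
    have : (X:Pol) * (d * y) = X * (X * k) := by rw [hk]; ring
    exact mul_left_cancel₀ Polynomial.X_ne_zero this
  exact hy (X_dvd_of_dvd_mul hd h4)

/-- nonemptiness witnesses -/
lemma nonempty_CA : (Sset (F := F) CA).Nonempty := by
  refine ⟨mk K (v2 0 1) ?_, mem_Sset _ ⟨dvd_zero _, notX_one⟩⟩
  exact norm_ne_zero (fun h => notX_one h.2)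

lemma nonempty_CB : (Sset (F := F) CB).Nonempty := by
  refine ⟨mk K (v2 (-1) 1) ?_, mem_Sset _ ⟨by simp, notX_one⟩⟩
  exact norm_ne_zero (fun h => notX_one h.2)

end Poly

noncomputable instance PGLact (K : Type) [Field K] : MulAction (PGL2 K) (PP K) :=
  MulAction.compHom _ (QuotientGroup.lift _ rho0 center_le_ker_rho0)

lemma act_mk {K : Type} [Field K] (g : GL (Fin 2) K) (v : Fin 2 → K) (hv : v ≠ 0) :
    (QuotientGroup.mk g : PGL2 K) • Projectivization.mk K v hv =
      Projectivization.mk K ((g : Matrix (Fin 2) (Fin 2) K) *ᵥ v) (gmulVec_ne_zero g hv) := by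
  have h1 : (QuotientGroup.mk g : PGL2 K) • (Projectivization.mk K v hv)
      = pact g (Projectivization.mk K v hv) := rfl
  rw [h1, pact_mk]

lemma act_mk_inv {K : Type} [Field K] (g : GL (Fin 2) K) (M : Matrix (Fin 2) (Fin 2) K)
    {c : K} (hM : (g : Matrix (Fin 2) (Fin 2) K) * M = c • (1 : Matrix (Fin 2) (Fin 2) K))
    (hc : c ≠ 0) (v : Fin 2 → K) (hv : v ≠ 0) (hMv : M *ᵥ v ≠ 0) :
    (QuotientGroup.mk g : PGL2 K)⁻¹ • Projectivization.mk K v hv =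
      Projectivization.mk K (M *ᵥ v) hMv := by
  have hMeq : M = c • (↑g⁻¹ : Matrix (Fin 2) (Fin 2) K) := by
    calc M = ((↑g⁻¹ : Matrix (Fin 2) (Fin 2) K) * ↑g) * M := by
            rw [← Units.val_mul, inv_mul_cancel, Units.val_one, Matrix.one_mul]
      _ = (↑g⁻¹ : Matrix (Fin 2) (Fin 2) K) * (↑g * M) := by rw [Matrix.mul_assoc]
      _ = (↑g⁻¹ : Matrix (Fin 2) (Fin 2) K) * (c • 1) := by rw [hM]
      _ = c • (↑g⁻¹ : Matrix (Fin 2) (Fin 2) K) := by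
            rw [Matrix.mul_smul, Matrix.mul_one]
  have h1 : (QuotientGroup.mk g : PGL2 K)⁻¹ = (QuotientGroup.mk g⁻¹ : PGL2 K) := rfl
  rw [h1, act_mk]
  rw [Projectivization.mk_eq_mk_iff']
  refine ⟨c⁻¹, ?_⟩
  rw [hMeq, Matrix.smul_mulVec, smul_smul, inv_mul_cancel₀ hc, one_smul]

section Main

variable (p : ℕ) [Fact p.Prime]

local notation "KK" => RatFunc (ZMod p)
local notation "Pol2" => Polynomial (ZMod p)
local notation "ff" => algebraMap (Polynomial (ZMod p)) (RatFunc (ZMod p))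

noncomputable def Aglu : GL (Fin 2) KK := Xmat p * Ymat p

noncomputable def Bglu : GL (Fin 2) KK :=
  Xmat p * Xmat p * Ymat p * Xmat p * Ymat p * Xmat p * Ymat p * Xmat p

lemma mulVec_v2 (a b c d x y : Pol2) :
    (!![ff a, ff b; ff c, ff d] : Matrix (Fin 2) (Fin 2) KK) *ᵥ (v2 x y) =
      v2 (a*x+b*y) (c*x+d*y) := by
  funext i
  fin_cases i <;>
    simp [v2, Matrix.mulVec, dotProduct, Fin.sum_univ_two, map_add, _root_.map_mul]

lemma Aval : ((Aglu p : GL (Fin 2) KK) : Matrix (Fin 2) (Fin 2) KK) =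
    !![ff X, ff 0; ff (-X), ff (-1)] := by
  show (!![0, 1; -1, -1] : Matrix (Fin 2) (Fin 2) KK) * !![0, 1; RatFunc.X, 0] = _
  rw [Matrix.mul_fin_two]
  ext i j
  fin_cases i <;> fin_cases j <;>
    simp [map_neg, RatFunc.algebraMap_X, _root_.map_one]

lemma Bval : ((Bglu p : GL (Fin 2) KK) : Matrix (Fin 2) (Fin 2) KK) =
    !![ff 1, ff (1 - X + X^2 - X^3); ff (-1), ff (-1 + X - X^2)] := by
  show (!![0, 1; -1, -1] : Matrix (Fin 2) (Fin 2) KK) * !![0, 1; -1, -1] * !![0, 1; RatFunc.X, 0]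
      * !![0, 1; -1, -1] * !![0, 1; RatFunc.X, 0] * !![0, 1; -1, -1] * !![0, 1; RatFunc.X, 0]
      * !![0, 1; -1, -1] = _
  simp only [Matrix.mul_fin_two]
  ext i j
  fin_cases i <;> fin_cases j <;>
    simp [map_neg, map_sub, map_add, map_pow, _root_.map_one, RatFunc.algebraMap_X] <;>
    ring

lemma AMA : ((Aglu p : GL (Fin 2) KK) : Matrix (Fin 2) (Fin 2) KK) *
    !![ff (-1), ff 0; ff X, ff X] = (ff (-X)) • (1 : Matrix (Fin 2) (Fin 2) KK) := by
  rw [Aval, Matrix.mul_fin_two]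
  ext i j
  fin_cases i <;> fin_cases j <;>
    simp [map_neg, RatFunc.algebraMap_X, _root_.map_one, Matrix.one_apply,
      Matrix.smul_apply] <;>
    ring

lemma BMB : ((Bglu p : GL (Fin 2) KK) : Matrix (Fin 2) (Fin 2) KK) *
    !![ff (-1 + X - X^2), ff (-1 + X - X^2 + X^3); ff 1, ff 1] =
      (ff (-X^3)) • (1 : Matrix (Fin 2) (Fin 2) KK) := by
  rw [Bval, Matrix.mul_fin_two]
  ext i j
  fin_cases i <;> fin_cases j <;>
    simp [map_neg, map_sub, map_add, map_pow, _root_.map_one, RatFunc.algebraMap_X,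
      Matrix.one_apply, Matrix.smul_apply] <;>
    ring

lemma ffX_ne : (ff X : KK) ≠ 0 :=
  RatFunc.algebraMap_ne_zero Polynomial.X_ne_zero

lemma ffX3_ne : (ff (-X^3) : KK) ≠ 0 :=
  RatFunc.algebraMap_ne_zero (by simp [Polynomial.X_ne_zero])

lemma not_mem_cond {C : Pol2 → Pol2 → Prop} {x y : Pol2} (h : v2 x y ≠ 0)
    (hQ : Projectivization.mk KK (v2 x y) h ∉ Sset C) : ¬ C x y :=
  fun hC => hQ (mem_Sset h hC)

end Main
section Pings

variable (p : ℕ) [Fact p.Prime]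

local notation "KK" => RatFunc (ZMod p)
local notation "Pol2" => Polynomial (ZMod p)
local notation "ff" => algebraMap (Polynomial (ZMod p)) (RatFunc (ZMod p))

lemma mk_sset {x y : Pol2} (v : Fin 2 → KK) (hv : v ≠ 0) {C : Pol2 → Pol2 → Prop}
    (hC : C x y) (hn : v2 x y ≠ 0) (hveq : v = v2 x y) :
    Projectivization.mk KK v hv ∈ Sset C := by
  refine ⟨x, y, hn, hC, ?_⟩
  rw [Projectivization.mk_eq_mk_iff']
  exact ⟨1, by rw [one_smul, hveq]⟩

lemma mk_sset_div {x y : Pol2} (v : Fin 2 → KK) (hv : v ≠ 0) {C : Pol2 → Pol2 → Prop}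
    (hC : C x y) (hn : v2 x y ≠ 0) (hveq : v = v2 (X * x) (X * y)) :
    Projectivization.mk KK v hv ∈ Sset C := by
  refine ⟨x, y, hn, hC, ?_⟩
  rw [Projectivization.mk_eq_mk_iff']
  refine ⟨ff X, ?_⟩
  rw [hveq, v2_smul]

lemma pingA : (QuotientGroup.mk (Aglu p) : PGL2 KK) • (Sset (F := ZMod p) CAi)ᶜ ⊆
    Sset (F := ZMod p) CA := by
  rintro P ⟨Q, hQ, rfl⟩
  obtain ⟨x, y, h, hnorm, rfl⟩ := exists_rep Q
  show (QuotientGroup.mk (Aglu p) : PGL2 KK) • Projectivization.mk KK (v2 x y) h ∈ Sset CA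
  have hy : ¬ X ∣ y := by
    intro hXy
    exact hQ (mem_Sset h ⟨fun hx => hnorm ⟨hx, hXy⟩, hXy⟩)
  rw [act_mk]
  have hvec : ((Aglu p : GL (Fin 2) KK) : Matrix (Fin 2) (Fin 2) KK) *ᵥ v2 x y
      = v2 (X*x + 0*y) ((-X)*x + (-1)*y) := by rw [Aval, mulVec_v2]
  have hCA : CA (X*x + 0*y) ((-X)*x + (-1)*y) := by
    constructor
    · exact ⟨x, by ring⟩
    · intro hq
      apply hy
      have hyy : y = -((-X)*x + (-1)*y) - X*x := by ring
      rw [hyy]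
      exact dvd_sub (dvd_neg.2 hq) (dvd_mul_right X x)
  exact mk_sset p _ _ hCA (norm_ne_zero (CA_norm hCA)) hvec

lemma pingAinv : (QuotientGroup.mk (Aglu p) : PGL2 KK)⁻¹ • (Sset (F := ZMod p) CA)ᶜ ⊆
    Sset (F := ZMod p) CAi := by
  rintro P ⟨Q, hQ, rfl⟩
  obtain ⟨x, y, h, hnorm, rfl⟩ := exists_rep Q
  show (QuotientGroup.mk (Aglu p) : PGL2 KK)⁻¹ • Projectivization.mk KK (v2 x y) h ∈ Sset CAi
  have hx : ¬ X ∣ x := by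
    intro hXx
    exact hQ (mem_Sset h ⟨hXx, fun hyy => hnorm ⟨hXx, hyy⟩⟩)
  have hvec : (!![ff (-1), ff 0; ff X, ff X] : Matrix (Fin 2) (Fin 2) KK) *ᵥ v2 x y
      = v2 ((-1)*x + 0*y) (X*x + X*y) := mulVec_v2 p _ _ _ _ _ _
  have hCAi : CAi ((-1)*x + 0*y) (X*x + X*y) := by
    constructor
    · intro hq
      apply hx
      have hxx : x = -((-1)*x + 0*y) := by ring
      rw [hxx]
      exact dvd_neg.2 hq
    · exact ⟨x + y, by ring⟩
  have hMv : (!![ff (-1), ff 0; ff X, ff X] : Matrix (Fin 2) (Fin 2) KK) *ᵥ v2 x y ≠ 0 := by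
    rw [hvec]; exact norm_ne_zero (CAi_norm hCAi)
  rw [act_mk_inv (Aglu p) _ (AMA p) (RatFunc.algebraMap_ne_zero (neg_ne_zero.2 Polynomial.X_ne_zero)) _ h hMv]
  exact mk_sset p _ _ hCAi (norm_ne_zero (CAi_norm hCAi)) hvec

lemma pingB : (QuotientGroup.mk (Bglu p) : PGL2 KK) • (Sset (F := ZMod p) CBi)ᶜ ⊆
    Sset (F := ZMod p) CB := by
  rintro P ⟨Q, hQ, rfl⟩
  obtain ⟨x, y, h, hnorm, rfl⟩ := exists_rep Q
  show (QuotientGroup.mk (Bglu p) : PGL2 KK) • Projectivization.mk KK (v2 x y) h ∈ Sset CB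
  have hQ2 : ¬ CBi x y := not_mem_cond p h hQ
  rw [act_mk]
  have hvec : ((Bglu p : GL (Fin 2) KK) : Matrix (Fin 2) (Fin 2) KK) *ᵥ v2 x y
      = v2 (1*x + (1-X+X^2-X^3)*y) ((-1)*x + (-1+X-X^2)*y) := by rw [Bval, mulVec_v2]
  by_cases hw : (X : Pol2) ∣ x + (1-X)*y
  · -- divide by X case
    obtain ⟨w1, hw1⟩ := hw
    have hy : ¬ X ∣ y := by
      intro hXy
      apply hnorm
      refine ⟨?_, hXy⟩
      have hxx : x = X*w1 - (1-X)*y := by rw [← hw1]; ring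
      rw [hxx]
      exact dvd_sub (dvd_mul_right _ _) (hXy.mul_left _)
    have hw2 : ¬ (X:Pol2)^2 ∣ x + (1-X)*y := fun h2 => hQ2 ⟨h2, hy⟩
    have hw3 : ¬ (X:Pol2) ∣ w1 := by
      intro ⟨k, hk⟩
      exact hw2 ⟨k, by rw [hw1, hk]; ring⟩
    have e1 : 1*x + (1-X+X^2-X^3)*y = X * (w1 + X*(1-X)*y) := by linear_combination hw1
    have e2 : (-1)*x + (-1+X-X^2)*y = X * (-w1 - X*y) := by linear_combination (-1 : Pol2) * hw1
    have hCB : CB (w1 + X*(1-X)*y) (-w1 - X*y) := by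
      constructor
      · exact ⟨-y, by ring⟩
      · intro hq
        apply hw3
        have : w1 = -(-w1 - X*y) - X*y := by ring
        rw [this]
        exact dvd_sub (dvd_neg.2 hq) (dvd_mul_right _ _)
    refine mk_sset_div p _ _ hCB (norm_ne_zero (CB_norm hCB)) ?_
    rw [hvec, e1, e2]
  · have hCB : CB (1*x + (1-X+X^2-X^3)*y) ((-1)*x + (-1+X-X^2)*y) := by
      constructor
      · exact ⟨-X*y, by ring⟩
      · intro hq
        apply hw
        have : x + (1-X)*y = -((-1)*x + (-1+X-X^2)*y) - X^2*y := by ring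
        rw [this]
        exact dvd_sub (dvd_neg.2 hq) ⟨X*y, by ring⟩
    exact mk_sset p _ _ hCB (norm_ne_zero (CB_norm hCB)) hvec

lemma pingBinv : (QuotientGroup.mk (Bglu p) : PGL2 KK)⁻¹ • (Sset (F := ZMod p) CB)ᶜ ⊆
    Sset (F := ZMod p) CBi := by
  rintro P ⟨Q, hQ, rfl⟩
  obtain ⟨x, y, h, hnorm, rfl⟩ := exists_rep Q
  show (QuotientGroup.mk (Bglu p) : PGL2 KK)⁻¹ • Projectivization.mk KK (v2 x y) h ∈ Sset CBi
  have hQ2 : ¬ CB x y := not_mem_cond p h hQ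
  have hvec : (!![ff (-1 + X - X^2), ff (-1 + X - X^2 + X^3); ff 1, ff 1] :
      Matrix (Fin 2) (Fin 2) KK) *ᵥ v2 x y
      = v2 ((-1+X-X^2)*x + (-1+X-X^2+X^3)*y) (1*x + 1*y) := mulVec_v2 p _ _ _ _ _ _
  have hc3 : (ff (-X^3) : KK) ≠ 0 := ffX3_ne p
  by_cases hs : (X : Pol2) ∣ x + y
  · obtain ⟨s1, hs1⟩ := hs
    have hy : ¬ X ∣ y := by
      intro hXy
      apply hnorm
      refine ⟨?_, hXy⟩
      have hxx : x = X*s1 - y := by rw [← hs1]; ring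
      rw [hxx]
      exact dvd_sub (dvd_mul_right _ _) hXy
    have hs2 : ¬ (X:Pol2)^2 ∣ x + y := fun h2 => hQ2 ⟨h2, hy⟩
    have hs3 : ¬ (X:Pol2) ∣ s1 := by
      intro ⟨k, hk⟩
      exact hs2 ⟨k, by rw [hs1, hk]; ring⟩
    have e1 : (-1+X-X^2)*x + (-1+X-X^2+X^3)*y = X * ((-1+X-X^2)*s1 + X^2*y) := by
      linear_combination (-1+X-X^2 : Pol2) * hs1
    have e2 : 1*x + 1*y = X * s1 := by linear_combination hs1
    have hCBi : CBi ((-1+X-X^2)*s1 + X^2*y) s1 := by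
      constructor
      · exact ⟨y - s1, by ring⟩
      · exact hs3
    have hMv : (!![ff (-1 + X - X^2), ff (-1 + X - X^2 + X^3); ff 1, ff 1] :
      Matrix (Fin 2) (Fin 2) KK) *ᵥ v2 x y ≠ 0 := by
      rw [hvec, e1, e2]
      intro h0
      rw [v2_smul] at h0
      rcases smul_eq_zero.mp h0 with h0 | h0
      · exact ffX_ne p h0
      · exact norm_ne_zero (CBi_norm hCBi) h0
    rw [act_mk_inv (Bglu p) _ (BMB p) hc3 _ h hMv]
    refine mk_sset_div p _ _ hCBi (norm_ne_zero (CBi_norm hCBi)) ?_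
    rw [hvec, e1, e2]
  · have hCBi : CBi ((-1+X-X^2)*x + (-1+X-X^2+X^3)*y) (1*x + 1*y) := by
      constructor
      · exact ⟨-x - y + X*y, by ring⟩
      · intro hq
        apply hs
        have : x + y = 1*x + 1*y := by ring
        rw [this]
        exact hq
    have hMv : (!![ff (-1 + X - X^2), ff (-1 + X - X^2 + X^3); ff 1, ff 1] :
      Matrix (Fin 2) (Fin 2) KK) *ᵥ v2 x y ≠ 0 := by
      rw [hvec]
      exact norm_ne_zero (CBi_norm hCBi)
    rw [act_mk_inv (Bglu p) _ (BMB p) hc3 _ h hMv]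
    exact mk_sset p _ _ hCBi (norm_ne_zero (CBi_norm hCBi)) hvec

end Pings

/-- The subgroup of `PGL₂(𝔽_p(t))` (for `p ≥ 3`) generated by the images of
`(0,1;−1,−1)` and `(0,1;t,0)` contains a nonabelian free subgroup;
in particular it is infinite. -/
theorem PGL2_contains_free (p : ℕ) [Fact p.Prime] (hp : 3 ≤ p) :
    (∃ f : FreeGroup Bool →* PGL2 (RatFunc (ZMod p)),
        Function.Injective f ∧
        ∀ g, f g ∈ Subgroup.closure
          ({QuotientGroup.mk (Xmat p), QuotientGroup.mk (Ymat p)} :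
            Set (PGL2 (RatFunc (ZMod p))))) ∧
    Infinite (Subgroup.closure
      ({QuotientGroup.mk (Xmat p), QuotientGroup.mk (Ymat p)} :
        Set (PGL2 (RatFunc (ZMod p))))) := by
  classical
  set S : Set (PGL2 (RatFunc (ZMod p))) :=
    {QuotientGroup.mk (Xmat p), QuotientGroup.mk (Ymat p)} with hS
  let afun : Bool → PGL2 (RatFunc (ZMod p)) := fun i =>
    if i then QuotientGroup.mk (Aglu p) else QuotientGroup.mk (Bglu p)
  have hinj : Function.Injective (FreeGroup.lift afun) := by
    apply FreeGroup.injective_lift_of_ping_pong afun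
      (fun i => if i then Sset (F := ZMod p) CA else Sset (F := ZMod p) CB)
      (fun i => if i then Sset (F := ZMod p) CAi else Sset (F := ZMod p) CBi)
    · intro i
      cases i
      · simpa using nonempty_CB
      · simpa using nonempty_CA
    · intro i j hij
      cases i <;> cases j <;> simp_all
      · exact (disj_CA_CB).symm
      · exact disj_CA_CB
    · intro i j hij
      cases i <;> cases j <;> simp_all
      · exact (disj_CAi_CBi).symm
      · exact disj_CAi_CBi
    · intro i j
      cases i <;> cases j <;> simp
      · exact disj_CB_CBi
      · exact (disj_CAi_CB).symm
      · exact disj_CA_CBi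
      · exact disj_CA_CAi
    · intro i
      cases i
      · simpa [afun] using pingB p
      · simpa [afun] using pingA p
    · intro i
      cases i
      · simpa [afun, Pi.inv_apply] using pingBinv p
      · simpa [afun, Pi.inv_apply] using pingAinv p
  have hXS : (QuotientGroup.mk (Xmat p) : PGL2 (RatFunc (ZMod p))) ∈ Subgroup.closure S :=
    Subgroup.subset_closure (Set.mem_insert _ _)
  have hYS : (QuotientGroup.mk (Ymat p) : PGL2 (RatFunc (ZMod p))) ∈ Subgroup.closure S :=
    Subgroup.subset_closure (Set.mem_insert_of_mem _ rfl)
  have hA : (QuotientGroup.mk (Aglu p) : PGL2 (RatFunc (ZMod p))) ∈ Subgroup.closure S := by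
    have : (QuotientGroup.mk (Aglu p) : PGL2 (RatFunc (ZMod p))) =
        QuotientGroup.mk (Xmat p) * QuotientGroup.mk (Ymat p) := rfl
    rw [this]
    exact mul_mem hXS hYS
  have hB : (QuotientGroup.mk (Bglu p) : PGL2 (RatFunc (ZMod p))) ∈ Subgroup.closure S := by
    have : (QuotientGroup.mk (Bglu p) : PGL2 (RatFunc (ZMod p))) =
        QuotientGroup.mk (Xmat p) * QuotientGroup.mk (Xmat p) * QuotientGroup.mk (Ymat p) *
        QuotientGroup.mk (Xmat p) * QuotientGroup.mk (Ymat p) * QuotientGroup.mk (Xmat p) *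
        QuotientGroup.mk (Ymat p) * QuotientGroup.mk (Xmat p) := rfl
    rw [this]
    exact mul_mem (mul_mem (mul_mem (mul_mem (mul_mem (mul_mem (mul_mem hXS hXS) hYS) hXS)
      hYS) hXS) hYS) hXS
  have hmem : ∀ g, FreeGroup.lift afun g ∈ Subgroup.closure S := by
    intro g
    refine FreeGroup.induction_on g ?_ ?_ ?_ ?_
    · simp only [_root_.map_one]
      exact one_mem _
    · intro x
      have : FreeGroup.lift afun (FreeGroup.of x) = afun x := FreeGroup.lift_apply_of
      rw [this]
      cases x
      · exact hB
      · exact hA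
    · intro x hx
      rw [_root_.map_inv]
      exact inv_mem hx
    · intro x y hx hy
      rw [_root_.map_mul]
      exact mul_mem hx hy
  refine ⟨⟨FreeGroup.lift afun, hinj, hmem⟩, ?_⟩
  refine Infinite.of_injective
    (fun w : FreeGroup Bool => (⟨FreeGroup.lift afun w, hmem w⟩ : Subgroup.closure S)) ?_
  intro w1 w2 hw
  exact hinj (congrArg Subtype.val hw)
end
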